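/- Every complex root λ of the characteristic equation λ + e^{-λ} = 0 has negative real part. -/

import Mathlib

theorem char_roots_negative_real_part (lam : ℂ)
    (h : lam + Complex.exp (-lam) = 0) : lam.re < 0 := by
  by_contra hx
  push_neg at hx
  have hlam : lam = -Complex.exp (-lam) := by linear_combination h
  -- modulus equation
  have habs : ‖lam‖ = Real.exp (-lam.re) := by
    conv_lhs => rw [hlam, norm_neg, Complex.norm_exp, Complex.neg_re]
  have h1 : ‖lam‖ ≤ 1 := by
    rw [habs]; exact Real.exp_le_one_iff.mpr (by linarith)
  have him : |lam.im| ≤ 1 := le_trans (Complex.abs_im_le_norm lam) h1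
  have hcos : 0 < Real.cos lam.im := by
    apply Real.cos_pos_of_mem_Ioo
    constructor
    · nlinarith [abs_le.mp him, Real.pi_gt_three]
    · nlinarith [abs_le.mp him, Real.pi_gt_three]
  -- real part equation
  have hre : lam.re = -(Real.exp (-lam.re) * Real.cos lam.im) := by
    conv_lhs => rw [hlam]
    simp [Complex.exp_re]
  nlinarith [Real.exp_pos (-lam.re)]
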